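/- Let V be a finite type and f, g : Finset V → ℝ submodular with g(∅) = 0. Fix X ⊆ V, let m_X be the modular upper bound of f tight at X given by m_X(S) := f(X) − Σ_{v∈X\S} (f(X) − f(X \ {v})) + Σ_{v∈S\X} (f({v}) − f(∅)), and let σ be any bijection from Fin |V| to V whose first |X| elements enumerate X, with h_σ(S) := Σ_{v∈S} (g(S_{idx(v)+1}) − g(S_{idx(v)})) the associated prefix-difference modular lower bound of g (S_i denoting the i-th prefix of σ). Then the modular function S ↦ m_X(S) − h_σ(S) satisfies m_X(S) − h_σ(S) ≥ f(S) − g(S) for all S ⊆ V, with equality at S = X. -/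

import Mathlib

/-- A set function `f : Finset V → ℝ` is submodular if adding an element to a smaller
set gains at least as much as adding it to a larger set:
`f(A ∪ {v}) − f(A) ≥ f(B ∪ {v}) − f(B)` for all `A ⊆ B` and `v ∉ B`. -/
def Submodular {V : Type*} [DecidableEq V] (f : Finset V → ℝ) : Prop :=
  ∀ ⦃A B : Finset V⦄, A ⊆ B → ∀ v ∉ B,
    f (insert v B) - f B ≤ f (insert v A) - f A

/-- The modular upper bound of `f` tight at `X`:
`m_X(S) = f(X) − Σ_{v∈X\S} (f(X) − f(X \ {v})) + Σ_{v∈S\X} (f({v}) − f(∅))`. -/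
noncomputable def modularUB {V : Type*} [DecidableEq V] (f : Finset V → ℝ)
    (X S : Finset V) : ℝ :=
  f X - ∑ v ∈ X \ S, (f X - f (X.erase v)) + ∑ v ∈ S \ X, (f {v} - f ∅)

/-- The `i`-th prefix `S_i = {σ(0), …, σ(i−1)}` of the ordering `σ`. -/
def prefixSet {V : Type*} [DecidableEq V] {n : ℕ} (σ : Fin n ≃ V) (i : ℕ) : Finset V :=
  (Finset.univ.filter fun j : Fin n => (j : ℕ) < i).image σ

/-- The prefix gain `Δ_σ(v) = g(S_{idx(v)+1}) − g(S_{idx(v)})` where `idx(v) = σ⁻¹(v)`. -/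
noncomputable def prefixGain {V : Type*} [DecidableEq V] {n : ℕ} (σ : Fin n ≃ V)
    (g : Finset V → ℝ) (v : V) : ℝ :=
  g (prefixSet σ ((σ.symm v : ℕ) + 1)) - g (prefixSet σ (σ.symm v : ℕ))

/-- The modular lower bound `h_σ(S) = Σ_{v∈S} Δ_σ(v)`. -/
noncomputable def modularLB {V : Type*} [DecidableEq V] {n : ℕ} (σ : Fin n ≃ V)
    (g : Finset V → ℝ) (S : Finset V) : ℝ :=
  ∑ v ∈ S, prefixGain σ g v

open Finset

lemma mem_prefixSet' {V : Type*} [DecidableEq V] {n : ℕ} (σ : Fin n ≃ V) (i : ℕ) (v : V) :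
    v ∈ prefixSet σ i ↔ (σ.symm v : ℕ) < i := by
  simp only [prefixSet, mem_image, mem_filter, mem_univ, true_and]
  constructor
  · rintro ⟨j, hj, rfl⟩; simpa using hj
  · intro h; exact ⟨σ.symm v, h, σ.apply_symm_apply v⟩

lemma prefixSet_mono' {V : Type*} [DecidableEq V] {n : ℕ} (σ : Fin n ≃ V) {i j : ℕ}
    (h : i ≤ j) : prefixSet σ i ⊆ prefixSet σ j := fun v hv =>
  (mem_prefixSet' σ j v).mpr (lt_of_lt_of_le ((mem_prefixSet' σ i v).mp hv) h)

lemma prefixSet_succ' {V : Type*} [DecidableEq V] {n : ℕ} (σ : Fin n ≃ V) (i : Fin n) :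
    prefixSet σ ((i : ℕ) + 1) = insert (σ i) (prefixSet σ i) := by
  ext v
  simp only [mem_insert, mem_prefixSet', Nat.lt_succ_iff_lt_or_eq]
  constructor
  · rintro (h | h)
    · exact Or.inr h
    · left
      have : σ.symm v = i := Fin.ext h
      rw [← this, σ.apply_symm_apply]
  · rintro (rfl | h)
    · right; simp
    · exact Or.inl h

lemma submod_add' {V : Type*} [DecidableEq V] {f : Finset V → ℝ} (hf : Submodular f) :
    ∀ T A : Finset V, Disjoint A T → f (A ∪ T) ≤ f A + ∑ v ∈ T, (f {v} - f ∅) := by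
  intro T
  induction T using Finset.induction_on with
  | empty => intro A _; simp
  | @insert v T hv ih =>
    intro A hd
    have hvA : v ∉ A := fun h => (disjoint_left.mp hd h) (mem_insert_self v T)
    have hd' : Disjoint A T := hd.mono_right (subset_insert v T)
    have hvAT : v ∉ A ∪ T := by
      simp only [mem_union, not_or]; exact ⟨hvA, hv⟩
    have h1 := hf (empty_subset (A ∪ T)) v hvAT
    rw [insert_empty_eq] at h1
    have h2 := ih A hd'
    have h3 : A ∪ insert v T = insert v (A ∪ T) := by
      rw [union_insert]
    rw [h3, sum_insert hv]
    linarith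

lemma submod_remove' {V : Type*} [DecidableEq V] {f : Finset V → ℝ} (hf : Submodular f)
    (X : Finset V) :
    ∀ T : Finset V, T ⊆ X → f (X \ T) ≤ f X - ∑ v ∈ T, (f X - f (X.erase v)) := by
  intro T
  induction T using Finset.induction_on with
  | empty => intro _; simp
  | @insert v T hv ih =>
    intro hTX
    have hvX : v ∈ X := hTX (mem_insert_self v T)
    have hTX' : T ⊆ X := (subset_insert v T).trans hTX
    have hvXT : v ∈ X \ T := mem_sdiff.mpr ⟨hvX, hv⟩
    have hA : (X \ T).erase v ⊆ X.erase v :=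
      erase_subset_erase v sdiff_subset
    have h1 := hf hA v (notMem_erase v X)
    rw [insert_erase hvX, insert_erase hvXT] at h1
    have h2 := ih hTX'
    have h3 : X \ insert v T = (X \ T).erase v := by
      ext u
      simp only [mem_sdiff, mem_insert, mem_erase, not_or]
      tauto
    rw [h3, sum_insert hv]
    linarith

lemma telescope' {V : Type*} [Fintype V] [DecidableEq V] {n : ℕ} (σ : Fin n ≃ V)
    (g : Finset V → ℝ) (S : Finset V) :
    ∑ v ∈ S, (g (S ∩ prefixSet σ ((σ.symm v : ℕ) + 1)) - g (S ∩ prefixSet σ (σ.symm v : ℕ)))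
      = g S - g ∅ := by
  have hzero : ∀ v ∈ (univ : Finset V), v ∉ S →
      (g (S ∩ prefixSet σ ((σ.symm v : ℕ) + 1)) - g (S ∩ prefixSet σ (σ.symm v : ℕ))) = 0 := by
    intro v _ hv
    have h : S ∩ prefixSet σ ((σ.symm v : ℕ) + 1) = S ∩ prefixSet σ (σ.symm v : ℕ) := by
      rw [prefixSet_succ' σ (σ.symm v), σ.apply_symm_apply,
        inter_insert_of_notMem hv]
    rw [h, sub_self]
  rw [Finset.sum_subset (subset_univ S) hzero]
  rw [Equiv.sum_comp σ.symm
    (fun i : Fin n => g (S ∩ prefixSet σ ((i : ℕ) + 1)) - g (S ∩ prefixSet σ (i : ℕ)))]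
  rw [Fin.sum_univ_eq_sum_range
    (fun i : ℕ => g (S ∩ prefixSet σ (i + 1)) - g (S ∩ prefixSet σ i))]
  rw [Finset.sum_range_sub (fun i : ℕ => g (S ∩ prefixSet σ i))]
  have h1 : prefixSet σ n = univ := by
    ext v; simp [mem_prefixSet', Fin.is_lt]
  have h0 : prefixSet σ 0 = (∅ : Finset V) := by
    ext v; simp [mem_prefixSet']
  rw [h1, h0, inter_univ, inter_empty]

lemma modularLB_le' {V : Type*} [Fintype V] [DecidableEq V] {n : ℕ} (σ : Fin n ≃ V)
    {g : Finset V → ℝ} (hg : Submodular g) (hg0 : g ∅ = 0) (S : Finset V) :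
    modularLB σ g S ≤ g S := by
  have key : ∀ v ∈ S, prefixGain σ g v ≤
      g (S ∩ prefixSet σ ((σ.symm v : ℕ) + 1)) - g (S ∩ prefixSet σ (σ.symm v : ℕ)) := by
    intro v hv
    have hnm : v ∉ prefixSet σ ((σ.symm v : ℕ)) := by
      simp [mem_prefixSet']
    have h := hg (inter_subset_right : S ∩ prefixSet σ ((σ.symm v : ℕ)) ⊆ _) v hnm
    have hins : insert v (prefixSet σ ((σ.symm v : ℕ)))
        = prefixSet σ ((σ.symm v : ℕ) + 1) := by
      rw [prefixSet_succ' σ (σ.symm v), σ.apply_symm_apply]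
    rw [← inter_insert_of_mem hv, hins] at h
    simpa [prefixGain] using h
  calc modularLB σ g S ≤ ∑ v ∈ S,
        (g (S ∩ prefixSet σ ((σ.symm v : ℕ) + 1)) - g (S ∩ prefixSet σ (σ.symm v : ℕ))) :=
        Finset.sum_le_sum key
    _ = g S - g ∅ := telescope' σ g S
    _ = g S := by rw [hg0, sub_zero]

lemma modularLB_eq' {V : Type*} [Fintype V] [DecidableEq V] {n : ℕ} (σ : Fin n ≃ V)
    (g : Finset V → ℝ) (hg0 : g ∅ = 0) (X : Finset V)
    (hσ : prefixSet σ X.card = X) : modularLB σ g X = g X := by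
  have key : ∀ v ∈ X, prefixGain σ g v =
      g (X ∩ prefixSet σ ((σ.symm v : ℕ) + 1)) - g (X ∩ prefixSet σ (σ.symm v : ℕ)) := by
    intro v hv
    have hXsub : prefixSet σ X.card ⊆ X := by rw [hσ]
    have hidx : (σ.symm v : ℕ) < X.card := by
      have hv' : v ∈ prefixSet σ X.card := by rw [hσ]; exact hv
      exact (mem_prefixSet' σ X.card v).mp hv'
    have h1 : X ∩ prefixSet σ ((σ.symm v : ℕ) + 1) = prefixSet σ ((σ.symm v : ℕ) + 1) :=
      inter_eq_right.mpr ((prefixSet_mono' σ hidx).trans hXsub)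
    have h2 : X ∩ prefixSet σ ((σ.symm v : ℕ)) = prefixSet σ ((σ.symm v : ℕ)) :=
      inter_eq_right.mpr ((prefixSet_mono' σ hidx.le).trans hXsub)
    rw [h1, h2]; rfl
  rw [modularLB, Finset.sum_congr rfl key, telescope' σ g X, hg0, sub_zero]

lemma modularUB_ge' {V : Type*} [DecidableEq V] {f : Finset V → ℝ} (hf : Submodular f)
    (X S : Finset V) : f S ≤ modularUB f X S := by
  have h1 : f (X \ (X \ S)) ≤ f X - ∑ v ∈ X \ S, (f X - f (X.erase v)) :=
    submod_remove' hf X _ sdiff_subset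
  have hXS : X \ (X \ S) = X ∩ S := sdiff_sdiff_right_self
  have hd : Disjoint (X ∩ S) (S \ X) :=
    disjoint_left.mpr fun v hv1 hv2 => (mem_sdiff.mp hv2).2 (mem_inter.mp hv1).1
  have h2 : f ((X ∩ S) ∪ (S \ X)) ≤ f (X ∩ S) + ∑ v ∈ S \ X, (f {v} - f ∅) :=
    submod_add' hf _ _ hd
  have hU : (X ∩ S) ∪ (S \ X) = S := by
    ext u; simp only [mem_union, mem_inter, mem_sdiff]; tauto
  rw [hXS] at h1
  rw [hU] at h2
  unfold modularUB
  linarith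

theorem stmt_14 {V : Type*} [Fintype V] [DecidableEq V]
    (f g : Finset V → ℝ) (hf : Submodular f) (hg : Submodular g) (hg0 : g ∅ = 0)
    (X : Finset V) (σ : Fin (Fintype.card V) ≃ V)
    (hσ : prefixSet σ X.card = X) :
    (∀ S : Finset V, f S - g S ≤ modularUB f X S - modularLB σ g S) ∧
    modularUB f X X - modularLB σ g X = f X - g X := by
  constructor
  · intro S
    have h1 := modularUB_ge' hf X S
    have h2 := modularLB_le' σ hg hg0 S
    linarith
  · have h1 : modularUB f X X = f X := by simp [modularUB]
    rw [h1, modularLB_eq' σ g hg0 X hσ]
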